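/- Let x₀ ∈ B₁, let a, b be positive constants, let ℓ(x) = c + m·x be an affine function on ℝⁿ, and let σ : ℝⁿ × ℝ → ℝ be bounded and measurable. Define v(x) := (u(x₀ + a x) − ℓ(x₀ + a x))/b. Then u is a local minimizer of J_σ(·, B_a(x₀)) = ∫ (½‖Dw‖² + σ(x, w)) dx in B_a(x₀) if and only if v is a local minimizer in B₁ of ∫_{B₁} (½‖Dw‖² + σ*(x, w)) dx, where σ*(x, t) := b⁻² a² σ(x₀ + a x, b t + ℓ(x₀ + a x)). -/

import Mathlib

open MeasureTheory Metric Set Filter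

/-- The energy functional with x-dependent potential:
`J_σ(v, W) = ∫_W (½‖Dv(x)‖² + σ(x, v(x))) dx`. -/
noncomputable def Jx (n : ℕ) (σ : EuclideanSpace ℝ (Fin n) → ℝ → ℝ)
    (v : EuclideanSpace ℝ (Fin n) → ℝ) (W : Set (EuclideanSpace ℝ (Fin n))) : ℝ :=
  ∫ x in W, ((1:ℝ)/2) * ‖fderiv ℝ v x‖^2 + σ x (v x)

/-- `u` is a local minimizer of `J_σ` in the open set `W`: `u` is locally Lipschitz and for
every closed ball contained in `W` and every Lipschitz competitor agreeing with `u` outside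
the open ball, the energy of `u` on the ball does not exceed that of the competitor. -/
def IsLocMinX (n : ℕ) (σ : EuclideanSpace ℝ (Fin n) → ℝ → ℝ)
    (u : EuclideanSpace ℝ (Fin n) → ℝ) (W : Set (EuclideanSpace ℝ (Fin n))) : Prop :=
  LocallyLipschitz u ∧
  ∀ (y : EuclideanSpace ℝ (Fin n)) (ρ : ℝ), 0 < ρ → closedBall y ρ ⊆ W →
    ∀ v : EuclideanSpace ℝ (Fin n) → ℝ, (∃ K, LipschitzWith K v) →
      (∀ x, x ∉ ball y ρ → v x = u x) →
      Jx n σ u (ball y ρ) ≤ Jx n σ v (ball y ρ)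


section AuxGeneral
open NNReal
variable {E : Type*} [NormedAddCommGroup E] [NormedSpace ℝ E] [ProperSpace E]

/-- A locally Lipschitz function is Lipschitz on any convex compact set. -/
lemma aux_lipschitzOnWith {f : E → ℝ} (hf : LocallyLipschitz f) {s : Set E}
    (hs : Convex ℝ s) (hsc : IsCompact s) : ∃ K : ℝ≥0, LipschitzOnWith K f s := by
  choose K t ht hl using hf
  obtain ⟨F, hF⟩ : ∃ F : Finset E, s ⊆ ⋃ i ∈ F, interior (t i) :=
    hsc.elim_finite_subcover (fun i => interior (t i)) (fun i => isOpen_interior)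
      (fun z hz => mem_iUnion.2 ⟨z, mem_interior_iff_mem_nhds.2 (ht z)⟩)
  obtain ⟨δ, hδ, hball⟩ : ∃ δ > 0, ∀ x ∈ s, ∃ i : F, ball x δ ⊆ interior (t (i : E)) :=
    lebesgue_number_lemma_of_metric hsc (fun i : F => isOpen_interior)
      (fun z hz => by
        rcases mem_iUnion₂.1 (hF hz) with ⟨i, hi, hzi⟩
        exact mem_iUnion.2 ⟨⟨i, hi⟩, hzi⟩)
  set K₀ : ℝ≥0 := F.sup K with hK₀
  refine ⟨K₀, lipschitzOnWith_iff_dist_le_mul.2 fun p hp q hq => ?_⟩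
  have hloc : ∀ z ∈ s, ∀ x ∈ ball z δ, ∀ y ∈ ball z δ, dist (f x) (f y) ≤ K₀ * dist x y := by
    intro z hz x hx y hy
    obtain ⟨i, hi⟩ := hball z hz
    have hlip : LipschitzOnWith K₀ f (ball z δ) := by
      have h1 : LipschitzOnWith (K (i : E)) f (ball z δ) :=
        (hl (i : E)).mono ((hi.trans interior_subset))
      exact fun a ha b hb => le_trans (h1 ha hb) (by
        gcongr
        exact_mod_cast Finset.le_sup i.2)
    exact lipschitzOnWith_iff_dist_le_mul.1 hlip x hx y hy
  rcases eq_or_ne p q with rfl | hne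
  · simp
  have hd : 0 < dist p q := dist_pos.2 hne
  set N : ℕ := ⌈dist p q / δ⌉₊ + 1 with hN
  have hNpos : 0 < (N : ℝ) := by positivity
  have hstep : dist p q / N < δ := by
    rw [div_lt_iff₀ hNpos]
    have h1 : dist p q / δ < N := by
      calc dist p q / δ ≤ ⌈dist p q / δ⌉₊ := Nat.le_ceil _
      _ < N := by exact_mod_cast Nat.lt_succ_self _
    calc dist p q = (dist p q / δ) * δ := by field_simp
    _ < N * δ := mul_lt_mul_of_pos_right h1 hδ
    _ = δ * N := mul_comm _ _
  set P : ℕ → E := fun j => p + ((j : ℝ) / N) • (q - p) with hP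
  have hmem : ∀ j ≤ N, P j ∈ s := by
    intro j hj
    exact hs.add_smul_sub_mem hp hq ⟨by positivity, by
      rw [div_le_one hNpos]; exact_mod_cast hj⟩
  have hdist : ∀ j, dist (P j) (P (j+1)) = dist p q / N := by
    intro j
    have : P (j+1) - P j = ((1:ℝ)/N) • (q - p) := by
      simp only [hP]
      rw [add_sub_add_left_eq_sub, ← sub_smul]
      congr 1
      push_cast; ring
    rw [dist_eq_norm, ← neg_sub, norm_neg, this, norm_smul, Real.norm_eq_abs,
      abs_of_nonneg (by positivity : (0:ℝ) ≤ 1/N)]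
    rw [show ‖q - p‖ = dist p q from by rw [dist_eq_norm, ← neg_sub q p, norm_neg]]
    ring
  calc dist (f p) (f q) = dist (f (P 0)) (f (P N)) := by simp [hP]
  _ ≤ ∑ j ∈ Finset.range N, dist (f (P j)) (f (P (j+1))) := dist_le_range_sum_dist (fun j => f (P j)) N
  _ ≤ ∑ j ∈ Finset.range N, K₀ * (dist p q / N) := by
    apply Finset.sum_le_sum
    intro j hj
    have hj' : j < N := Finset.mem_range.1 hj
    have h1 : P j ∈ ball (P j) δ := mem_ball_self hδ
    have h2 : P (j+1) ∈ ball (P j) δ := by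
      rw [mem_ball, dist_comm, hdist j]; exact hstep
    calc dist (f (P j)) (f (P (j+1))) ≤ K₀ * dist (P j) (P (j+1)) :=
      hloc (P j) (hmem j hj'.le) _ h1 _ h2
    _ = K₀ * (dist p q / N) := by rw [hdist]
  _ = K₀ * dist p q := by
    rw [Finset.sum_const, Finset.card_range, nsmul_eq_mul]
    field_simp

/-- A locally Lipschitz function vanishing outside a ball is globally Lipschitz. -/
lemma aux_lipschitz_of_zero_outside {g : E → ℝ} (hg : LocallyLipschitz g) {y : E} {ρ : ℝ}
    (hρ : 0 < ρ) (h0 : ∀ x, x ∉ ball y ρ → g x = 0) : ∃ K : ℝ≥0, LipschitzWith K g := by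
  obtain ⟨K₁, hK₁⟩ := aux_lipschitzOnWith hg (convex_closedBall y (ρ+1)) (isCompact_closedBall y (ρ+1))
  obtain ⟨C, hC⟩ := (isCompact_closedBall y ρ).exists_bound_of_continuousOn
    hg.continuous.continuousOn
  have hCb : ∀ x, |g x| ≤ max C 0 := by
    intro x
    by_cases hx : x ∈ closedBall y ρ
    · exact le_max_of_le_left (hC x hx)
    · rw [h0 x (fun h => hx (ball_subset_closedBall h))]; simp
  set M : ℝ≥0 := ⟨max C 0, le_max_right _ _⟩ with hM
  refine ⟨K₁ + M, lipschitzWith_iff_dist_le_mul.2 fun p' q' => ?_⟩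
  have key : ∀ p q : E, p ∉ closedBall y (ρ+1) → dist (g p) (g q) ≤ (K₁ + M : ℝ≥0) * dist p q := by
    intro p q hp
    have hgp : g p = 0 := h0 p (fun h => hp (ball_subset_closedBall (ball_subset_ball (by linarith) h)))
    by_cases hq : q ∈ ball y ρ
    · have h1 : (1:ℝ) ≤ dist p q := by
        have h2 : dist p y > ρ + 1 := by simpa [mem_closedBall, not_le] using hp
        have h3 : dist q y < ρ := mem_ball.1 hq
        have := dist_triangle p q y
        linarith
      calc dist (g p) (g q) = |g q| := by rw [hgp, dist_comm, Real.dist_eq, sub_zero]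
      _ ≤ M := hCb q
      _ ≤ M * dist p q := le_mul_of_one_le_right M.2 h1
      _ ≤ (K₁ + M : ℝ≥0) * dist p q := by
        apply mul_le_mul_of_nonneg_right _ dist_nonneg
        push_cast; linarith [K₁.coe_nonneg]
    · rw [hgp, h0 q hq]; simp; positivity
  by_cases hp : p' ∈ closedBall y (ρ+1)
  · by_cases hq : q' ∈ closedBall y (ρ+1)
    · calc dist (g p') (g q') ≤ K₁ * dist p' q' := lipschitzOnWith_iff_dist_le_mul.1 hK₁ p' hp q' hq
      _ ≤ (K₁ + M : ℝ≥0) * dist p' q' := by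
        apply mul_le_mul_of_nonneg_right _ dist_nonneg
        push_cast; linarith [M.coe_nonneg]
    · rw [dist_comm, dist_comm p' q']; exact key q' p' hq
  · exact key p' q' hp

/-- Bound for the (junk-extended) derivative of a locally Lipschitz function on a ball. -/
lemma aux_fderiv_bound {f : E → ℝ} (hf : LocallyLipschitz f) (y : E) (ρ : ℝ) :
    ∃ C : ℝ, 0 ≤ C ∧ ∀ x ∈ ball y ρ, ‖fderiv ℝ f x‖ ≤ C := by
  obtain ⟨K, hK⟩ := aux_lipschitzOnWith hf (convex_closedBall y (ρ+1)) (isCompact_closedBall y (ρ+1))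
  refine ⟨K, K.2, fun x hx => ?_⟩
  by_cases hd : DifferentiableAt ℝ f x
  · refine hd.hasFDerivAt.le_of_lipschitzOn ?_ hK
    refine Filter.mem_of_superset (isOpen_ball.mem_nhds ?_) ball_subset_closedBall
    exact mem_ball.2 (lt_of_lt_of_le (mem_ball.1 hx) (by
      have : dist x y < ρ := mem_ball.1 hx
      linarith))
  · rw [fderiv_zero_of_not_differentiableAt hd]; simp [K.2]

end AuxGeneral

section AuxEuclidean
open NNReal Module Pointwise
variable {n : ℕ}
local notation "Eu" => EuclideanSpace ℝ (Fin n)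

/-- Rademacher's theorem for locally Lipschitz functions. -/
lemma aux_ae_differentiableAt {f : Eu → ℝ} (hf : LocallyLipschitz f) :
    ∀ᵐ x : Eu, DifferentiableAt ℝ f x := by
  have h : ∀ R : ℕ, ∀ᵐ x : Eu, x ∈ ball (0 : Eu) R → DifferentiableAt ℝ f x := by
    intro R
    obtain ⟨K, hK⟩ := aux_lipschitzOnWith hf (convex_closedBall (0:Eu) R)
      (isCompact_closedBall (0:Eu) R)
    have h1 : LipschitzOnWith K f (ball (0:Eu) R) := hK.mono ball_subset_closedBall
    filter_upwards [h1.ae_differentiableWithinAt_of_mem] with x hx hmem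
    exact (hx hmem).differentiableAt (isOpen_ball.mem_nhds hmem)
  rw [← ae_all_iff] at h
  filter_upwards [h] with x hx
  obtain ⟨R, hR⟩ := exists_nat_gt ‖x‖
  exact hx R (mem_ball_zero_iff.2 hR)

/-- Key lemma: the integral of a directional derivative of a compactly supported Lipschitz
function vanishes. -/
lemma aux_integral_fderiv_eq_zero {g : Eu → ℝ} {K : ℝ≥0} (hg : LipschitzWith K g)
    (hsupp : HasCompactSupport g) (m : Eu) :
    ∫ x : Eu, fderiv ℝ g x m = 0 := by
  have h1 : ∫ x : Eu, fderiv ℝ g x m = ∫ x : Eu, lineDeriv ℝ g x m := by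
    apply integral_congr_ae
    filter_upwards [hg.ae_differentiableAt] with x hx
    exact (hx.lineDeriv_eq_fderiv).symm
  rw [h1]
  have h2 := LipschitzWith.integral_lineDeriv_mul_eq (μ := volume)
    (LipschitzWith.const' (1:ℝ) (K := 0)) hg hsupp (-m)
  have hconst : ∀ (x v : Eu), lineDeriv ℝ (fun _ : Eu => (1:ℝ)) x v = 0 := by
    intro x v
    simp [lineDeriv]
  simp only [hconst, zero_mul, integral_zero, neg_neg, mul_one] at h2
  exact h2.symm

/-- Expansion of the squared dual norm. -/
lemma aux_dual_norm_sq (m : Eu) (L : Eu →L[ℝ] ℝ) :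
    ‖L - innerSL ℝ m‖^2 = ‖L‖^2 - 2 * (L m) + ‖m‖^2 := by
  set v : Eu := (InnerProductSpace.toDual ℝ Eu).symm L with hv
  have hL : L = InnerProductSpace.toDual ℝ Eu v := by simp [hv]
  have hm : innerSL ℝ m = InnerProductSpace.toDual ℝ Eu m := rfl
  rw [hL, hm, ← map_sub]
  rw [(InnerProductSpace.toDual ℝ Eu).norm_map, (InnerProductSpace.toDual ℝ Eu).norm_map]
  rw [InnerProductSpace.toDual_apply_apply]
  exact norm_sub_sq_real v m

/-- Change of variables `z = x₀ + a • x` for set integrals over balls. -/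
lemma aux_change_of_var (x₀ : Eu) {a : ℝ} (ha : 0 < a) (F : Eu → ℝ) (y : Eu) (ρ : ℝ) :
    ∫ x in ball y ρ, F (x₀ + a • x) = (a ^ n)⁻¹ * ∫ z in ball (x₀ + a • y) (a * ρ), F z := by
  have h1 := Measure.setIntegral_comp_smul_of_pos volume (fun z => F (x₀ + z)) (ball y ρ) ha
  have h2 : a • ball y ρ = ball (a • y) (a * ρ) := by
    rw [smul_ball ha.ne' y ρ, Real.norm_eq_abs, abs_of_pos ha]
  have h3 : ∫ z in ball (a • y) (a * ρ), F (x₀ + z)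
      = ∫ w in ball (x₀ + a • y) (a * ρ), F w := by
    have hmp : MeasurePreserving (fun z : Eu => x₀ + z) volume volume :=
      measurePreserving_add_left volume x₀
    have hemb : MeasurableEmbedding (fun z : Eu => x₀ + z) :=
      (MeasurableEquiv.addLeft x₀).measurableEmbedding
    have hset : ball (a • y) (a * ρ) = (fun z : Eu => x₀ + z) ⁻¹' ball (x₀ + a • y) (a * ρ) := by
      ext z; simp [mem_ball, dist_add_left]
    rw [hset]
    exact hmp.setIntegral_preimage_emb hemb F _
  simp only [h2, h3, finrank_euclideanSpace_fin, smul_eq_mul, smul_add, ← add_assoc] at h1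
  convert h1 using 2

lemma aux_integrableOn_ball {f : Eu → ℝ} (hf : AEStronglyMeasurable f volume) (y : Eu) (ρ : ℝ)
    (C : ℝ) (hC : ∀ x ∈ ball y ρ, |f x| ≤ C) : IntegrableOn f (ball y ρ) volume := by
  apply Measure.integrableOn_of_bounded measure_ball_lt_top.ne hf
  filter_upwards [ae_restrict_mem measurableSet_ball] with x hx
  simpa [Real.norm_eq_abs] using hC x hx

lemma aux_fderiv_comp (x₀ : Eu) {a b : ℝ} (ha : 0 < a) (hb : 0 < b) (c : ℝ) (m : Eu)
    {g : Eu → ℝ} {x : Eu} (h : DifferentiableAt ℝ g (x₀ + a • x)) :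
    fderiv ℝ (fun x : Eu => (g (x₀ + a • x) - (c + (inner ℝ m (x₀ + a • x) : ℝ))) / b) x
      = (a / b) • (fderiv ℝ g (x₀ + a • x) - innerSL ℝ m) := by
  have hT : HasFDerivAt (fun x : Eu => x₀ + a • x) (a • ContinuousLinearMap.id ℝ Eu) x :=
    ((hasFDerivAt_id x).const_smul a).const_add x₀
  have h1 : HasFDerivAt (fun x : Eu => g (x₀ + a • x))
      ((fderiv ℝ g (x₀ + a • x)).comp (a • ContinuousLinearMap.id ℝ Eu)) x :=
    h.hasFDerivAt.comp x hT
  have h2 : HasFDerivAt (fun x : Eu => c + (inner ℝ m (x₀ + a • x) : ℝ))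
      (((innerSL ℝ m).comp (a • ContinuousLinearMap.id ℝ Eu))) x :=
    ((innerSL ℝ m).hasFDerivAt.comp x hT).const_add c
  have h3 := (h1.sub h2).const_mul b⁻¹
  simp only [div_eq_inv_mul]
  rw [show (fun x : Eu => b⁻¹ * (g (x₀ + a • x) - (c + inner ℝ m (x₀ + a • x)))) = (fun y => b⁻¹ * ((fun x => g (x₀ + a • x)) - fun x => c + inner ℝ m (x₀ + a • x)) y) from rfl, h3.fderiv]
  ext z
  simp only [ContinuousLinearMap.coe_sub', ContinuousLinearMap.coe_comp',
    ContinuousLinearMap.coe_smul', Pi.sub_apply, Pi.smul_apply, Function.comp_apply,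
    ContinuousLinearMap.coe_id', id_eq,
    ContinuousLinearMap.smul_apply]
  rw [(fderiv ℝ g (x₀ + a • x)).map_smul, (innerSL ℝ m).map_smul]
  simp only [smul_eq_mul]
  ring

lemma aux_ae_comp {P : Eu → Prop} (x₀ : Eu) {a : ℝ} (ha : 0 < a) (hP : ∀ᵐ z : Eu, P z) :
    ∀ᵐ x : Eu, P (x₀ + a • x) := by
  rw [ae_iff] at hP ⊢
  have hset : {x : Eu | ¬ P (x₀ + a • x)}
      = (fun x : Eu => a • x) ⁻¹' ((fun z : Eu => x₀ + z) ⁻¹' {z | ¬ P z}) := rfl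
  rw [hset, Measure.addHaar_preimage_smul volume ha.ne',
    measure_preimage_add volume x₀ _, hP, mul_zero]

/-- Lipschitz-continuity of the affine map `x ↦ x₀ + a • x`. -/
lemma aux_lip_affine (x₀ : Eu) (a : ℝ) : LipschitzWith ‖a‖₊ (fun x : Eu => x₀ + a • x) := by
  apply LipschitzWith.of_dist_le_mul
  intro p q
  rw [dist_add_left, dist_smul₀]
  rfl

lemma aux_lip_linear (c : ℝ) (m : Eu) :
    LipschitzWith ‖innerSL ℝ m‖₊ (fun z : Eu => c + (inner ℝ m z : ℝ)) := by
  apply LipschitzWith.of_dist_le_mul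
  intro p q
  rw [Real.dist_eq, add_sub_add_left_eq_sub, ← Real.dist_eq]
  exact (innerSL ℝ m).lipschitz.dist_le_mul p q

lemma aux_lip_const_mul {α : Type*} [PseudoMetricSpace α] {f : α → ℝ} {K : ℝ≥0} (hf : LipschitzWith K f) (b : ℝ) :
    LipschitzWith (‖b‖₊ * K) (fun z => b * f z) := by
  apply LipschitzWith.of_dist_le_mul
  intro p q
  rw [Real.dist_eq, ← mul_sub, abs_mul, ← Real.dist_eq]
  push_cast
  rw [mul_assoc]
  exact mul_le_mul_of_nonneg_left (hf.dist_le_mul p q) (abs_nonneg b)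

/-- `Φ u` is locally Lipschitz when `u` is. -/
lemma aux_phi_locallyLipschitz (x₀ : Eu) {a b : ℝ} (c : ℝ) (m : Eu) {u : Eu → ℝ}
    (hu : LocallyLipschitz u) :
    LocallyLipschitz (fun x : Eu => (u (x₀ + a • x) - (c + (inner ℝ m (x₀ + a • x) : ℝ))) / b) := by
  have h1 : LocallyLipschitz (fun x : Eu => u (x₀ + a • x)) :=
    hu.comp (aux_lip_affine x₀ a).locallyLipschitz
  have h2 : LocallyLipschitz (fun x : Eu => c + (inner ℝ m (x₀ + a • x) : ℝ)) :=
    ((aux_lip_linear c m).comp (aux_lip_affine x₀ a)).locallyLipschitz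
  have h3 := h1.sub h2
  have h4 : LocallyLipschitz (fun s : ℝ => s / b) := by
    have : LipschitzWith ‖b⁻¹‖₊ (fun s : ℝ => b⁻¹ * s) := by
      simpa using aux_lip_const_mul ((LipschitzWith.id (α := ℝ))) b⁻¹
    simp only [div_eq_inv_mul]
    exact this.locallyLipschitz
  exact h4.comp h3

/-- The fundamental rescaling identity for the energy. -/
lemma aux_J_eq (σ : Eu → ℝ → ℝ) (hσmeas : Measurable (Function.uncurry σ))
    (M : ℝ) (hσbdd : ∀ x t, |σ x t| ≤ M)
    (x₀ : Eu) {a b : ℝ} (ha : 0 < a) (hb : 0 < b) (c : ℝ) (m : Eu)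
    {g : Eu → ℝ} (hg : LocallyLipschitz g) (y' : Eu) (ρ : ℝ) :
    Jx n (fun x t => b⁻¹^2 * a^2 * σ (x₀ + a • x) (b * t + (c + inner ℝ m (x₀ + a • x))))
      (fun x => (g (x₀ + a • x) - (c + inner ℝ m (x₀ + a • x))) / b) (ball y' ρ)
    = (a/b)^2 * ((a ^ n)⁻¹ *
        (Jx n σ g (ball (x₀ + a • y') (a * ρ))
          - (∫ z in ball (x₀ + a • y') (a * ρ), fderiv ℝ g z m)
          + 1/2 * ‖m‖^2 * (volume (ball (x₀ + a • y') (a * ρ))).toReal)) := by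
  set B' := ball (x₀ + a • y') (a * ρ) with hB'
  set H : Eu → ℝ := fun z => (1/2) * ‖fderiv ℝ g z‖^2 - fderiv ℝ g z m
    + 1/2 * ‖m‖^2 + σ z (g z) with hH
  -- Step 1: pointwise a.e. identity
  have step1 : ∀ᵐ x : Eu,
      ((1:ℝ)/2) * ‖fderiv ℝ (fun x => (g (x₀ + a • x) - (c + inner ℝ m (x₀ + a • x))) / b) x‖^2
        + (fun x t => b⁻¹^2 * a^2 * σ (x₀ + a • x) (b * t + (c + inner ℝ m (x₀ + a • x)))) x
          ((fun x => (g (x₀ + a • x) - (c + inner ℝ m (x₀ + a • x))) / b) x)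
      = (a/b)^2 * H (x₀ + a • x) := by
    filter_upwards [aux_ae_comp x₀ ha (aux_ae_differentiableAt hg)] with x hx
    rw [aux_fderiv_comp x₀ ha hb c m hx]
    rw [norm_smul, Real.norm_eq_abs, abs_of_pos (div_pos ha hb), mul_pow, aux_dual_norm_sq]
    have hval : b * ((g (x₀ + a • x) - (c + (inner ℝ m (x₀ + a • x) : ℝ))) / b)
        + (c + (inner ℝ m (x₀ + a • x) : ℝ)) = g (x₀ + a • x) := by
      field_simp
      ring
    simp only [hval, hH]
    ring
  -- Step 2: rewrite the left Jx using the identity and change of variables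
  have step2 : Jx n (fun x t => b⁻¹^2 * a^2 * σ (x₀ + a • x) (b * t + (c + inner ℝ m (x₀ + a • x))))
      (fun x => (g (x₀ + a • x) - (c + inner ℝ m (x₀ + a • x))) / b) (ball y' ρ)
      = (a/b)^2 * ((a ^ n)⁻¹ * ∫ z in B', H z) := by
    have h1 : Jx n (fun x t => b⁻¹^2 * a^2 * σ (x₀ + a • x) (b * t + (c + inner ℝ m (x₀ + a • x))))
        (fun x => (g (x₀ + a • x) - (c + inner ℝ m (x₀ + a • x))) / b) (ball y' ρ)
        = ∫ x in ball y' ρ, (a/b)^2 * H (x₀ + a • x) := by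
      apply integral_congr_ae
      exact ae_restrict_of_ae step1
    rw [h1, integral_const_mul, aux_change_of_var x₀ ha H y' ρ]
  rw [step2]
  -- Step 3: split the integral of H
  congr 2
  obtain ⟨C, hC0, hC⟩ := aux_fderiv_bound hg (x₀ + a • y') (a * ρ)
  have hm1 : Measurable fun z : Eu => ‖fderiv ℝ g z‖ := (measurable_fderiv ℝ g).norm
  have i1 : IntegrableOn (fun z : Eu => ((1:ℝ)/2) * ‖fderiv ℝ g z‖^2) B' volume := by
    apply aux_integrableOn_ball (((hm1.pow_const 2).const_mul _).aestronglyMeasurable) _ _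
      ((1/2) * C^2)
    intro x hxB
    rw [abs_of_nonneg (by positivity)]
    have := hC x hxB
    gcongr
  have i2 : IntegrableOn (fun z : Eu => fderiv ℝ g z m) B' volume := by
    apply aux_integrableOn_ball (measurable_fderiv_apply_const (𝕜 := ℝ) (f := g) m).aestronglyMeasurable _ _
      (C * ‖m‖)
    intro x hxB
    calc |fderiv ℝ g x m| ≤ ‖fderiv ℝ g x‖ * ‖m‖ := (fderiv ℝ g x).le_opNorm m
    _ ≤ C * ‖m‖ := by gcongr; exact hC x hxB
  have i4 : IntegrableOn (fun z : Eu => σ z (g z)) B' volume := by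
    apply aux_integrableOn_ball ?_ _ _ M (fun x _ => hσbdd x (g x))
    exact (hσmeas.comp (measurable_id.prodMk hg.continuous.measurable)).aestronglyMeasurable
  have i3 : IntegrableOn (fun _ : Eu => 1/2 * ‖m‖^2) B' volume :=
    aux_integrableOn_ball aestronglyMeasurable_const _ _ (1/2 * ‖m‖^2) (fun x _ => by rw [abs_of_nonneg (by positivity)])
  have hJdef : Jx n σ g B' = ∫ z in B', (((1:ℝ)/2) * ‖fderiv ℝ g z‖^2 + σ z (g z)) := rfl
  have hsplit : (fun z : Eu => H z) = fun z =>
      ((((1:ℝ)/2) * ‖fderiv ℝ g z‖^2 + σ z (g z)) - fderiv ℝ g z m) + 1/2 * ‖m‖^2 := by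
    funext z
    simp only [hH]
    ring
  have i5 : IntegrableOn (fun z : Eu => ((1:ℝ)/2) * ‖fderiv ℝ g z‖^2 + σ z (g z)) B' volume :=
    i1.add i4
  have i6 : IntegrableOn (fun z : Eu =>
      (((1:ℝ)/2) * ‖fderiv ℝ g z‖^2 + σ z (g z)) - fderiv ℝ g z m) B' volume := i5.sub i2
  rw [hsplit, integral_add i6 i3, integral_sub i5 i2, hJdef, setIntegral_const]
  simp only [smul_eq_mul, measureReal_def]
  ring

lemma aux_core (hn : 0 < n) (σ : Eu → ℝ → ℝ) (hσmeas : Measurable (Function.uncurry σ))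
    (M : ℝ) (hσbdd : ∀ x t, |σ x t| ≤ M)
    (x₀ : Eu) {a b : ℝ} (ha : 0 < a) (hb : 0 < b) (c : ℝ) (m : Eu)
    (u : Eu → ℝ) (y : Eu) (r : ℝ)
    (hu : IsLocMinX n σ u (ball (x₀ + a • y) (a * r))) :
    IsLocMinX n
      (fun x t => b⁻¹^2 * a^2 * σ (x₀ + a • x) (b * t + (c + inner ℝ m (x₀ + a • x))))
      (fun x => (u (x₀ + a • x) - (c + inner ℝ m (x₀ + a • x))) / b)
      (ball y r) := by
  have hdistT : ∀ p q : Eu, dist (x₀ + a • p) (x₀ + a • q) = a * dist p q := by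
    intro p q
    rw [dist_add_left, dist_smul₀, Real.norm_eq_abs, abs_of_pos ha]
  have hTinv : ∀ z : Eu, x₀ + a • (a⁻¹ • (z - x₀)) = z := by
    intro z
    rw [smul_smul, mul_inv_cancel₀ ha.ne', one_smul, add_sub_cancel]
  refine ⟨aux_phi_locallyLipschitz x₀ c m hu.1, ?_⟩
  intro y' ρ hρ hsub w hwlip hw_eq
  set ℓ : Eu → ℝ := fun z => c + (inner ℝ m z : ℝ) with hℓ
  set wh : Eu → ℝ := fun z => b * w (a⁻¹ • (z - x₀)) + ℓ z with hwh
  -- wh pulls back to w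
  have hwh_w : ∀ x : Eu, (wh (x₀ + a • x) - (c + (inner ℝ m (x₀ + a • x) : ℝ))) / b = w x := by
    intro x
    simp only [hwh, hℓ, add_sub_cancel_left, smul_smul, inv_mul_cancel₀ ha.ne', one_smul]
    field_simp
    ring
  -- wh is Lipschitz
  have hwh_lip : ∃ K : ℝ≥0, LipschitzWith K wh := by
    obtain ⟨Kw, hKw⟩ := hwlip
    have hA : LipschitzWith ‖a⁻¹‖₊ (fun z : Eu => a⁻¹ • (z - x₀)) := by
      apply LipschitzWith.of_dist_le_mul
      intro p q
      rw [dist_smul₀, dist_eq_norm, sub_sub_sub_cancel_right, ← dist_eq_norm]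
      rfl
    exact ⟨_, (aux_lip_const_mul (hKw.comp hA) b).add (aux_lip_linear c m)⟩
  -- wh agrees with u outside the image ball
  have hwh_out : ∀ z : Eu, z ∉ ball (x₀ + a • y') (a * ρ) → wh z = u z := by
    intro z hz
    have hx : a⁻¹ • (z - x₀) ∉ ball y' ρ := by
      intro hmem
      apply hz
      rw [mem_ball, ← hTinv z, hdistT]
      exact (mul_lt_mul_iff_right₀ ha).2 (mem_ball.1 hmem)
    have := hw_eq _ hx
    simp only [hwh, hℓ, this, hTinv z]
    field_simp
    ring
  -- the image closed ball is inside the image domain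
  have hsub' : closedBall (x₀ + a • y') (a * ρ) ⊆ ball (x₀ + a • y) (a * r) := by
    intro z hz
    have h1 : a⁻¹ • (z - x₀) ∈ closedBall y' ρ := by
      rw [mem_closedBall, ← (mul_le_mul_iff_right₀ ha), ← hdistT, hTinv z]
      exact mem_closedBall.1 hz
    have h2 := hsub h1
    rw [mem_ball, ← hTinv z, hdistT]
    exact (mul_lt_mul_iff_right₀ ha).2 (mem_ball.1 h2)
  have key : Jx n σ u (ball (x₀ + a • y') (a * ρ)) ≤ Jx n σ wh (ball (x₀ + a • y') (a * ρ)) :=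
    hu.2 (x₀ + a • y') (a * ρ) (by positivity) hsub' wh hwh_lip hwh_out
  -- Lipschitz => locally Lipschitz for wh
  obtain ⟨Kwh, hKwh⟩ := hwh_lip
  have hwh_loc : LocallyLipschitz wh := hKwh.locallyLipschitz
  -- cross terms agree
  have cross : ∫ z in ball (x₀ + a • y') (a * ρ), fderiv ℝ wh z m
      = ∫ z in ball (x₀ + a • y') (a * ρ), fderiv ℝ u z m := by
    set g₀ : Eu → ℝ := fun z => wh z - u z with hg₀
    have hg₀loc : LocallyLipschitz g₀ := hwh_loc.sub hu.1
    have hg₀zero : ∀ z : Eu, z ∉ ball (x₀ + a • y') (a * ρ) → g₀ z = 0 := by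
      intro z hz; simp only [hg₀, sub_eq_zero]; exact hwh_out z hz
    obtain ⟨K₀, hK₀⟩ := aux_lipschitz_of_zero_outside hg₀loc (by positivity : 0 < a * ρ) hg₀zero
    have hsupp : HasCompactSupport g₀ := by
      apply HasCompactSupport.intro (isCompact_closedBall (x₀ + a • y') (a * ρ))
      intro z hz
      exact hg₀zero z (fun h => hz (ball_subset_closedBall h))
    have hzero : ∫ z : Eu, fderiv ℝ g₀ z m = 0 := aux_integral_fderiv_eq_zero hK₀ hsupp m
    -- fderiv of g₀ vanishes outside the closed ball
    have hptw : ∀ z : Eu, z ∉ closedBall (x₀ + a • y') (a * ρ) → fderiv ℝ g₀ z m = 0 := by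
      intro z hz
      have hev : g₀ =ᶠ[nhds z] (fun _ => (0:ℝ)) := by
        apply eventually_of_mem (Metric.isClosed_closedBall.isOpen_compl.mem_nhds hz)
        intro w' hw'
        exact hg₀zero w' (fun h => hw' (ball_subset_closedBall h))
      rw [hev.fderiv_eq, fderiv_const_apply]
      simp
    -- the set integral over the ball equals the global integral
    have hball_cb : (ball (x₀ + a • y') (a * ρ) : Set Eu) =ᵐ[volume]
        (closedBall (x₀ + a • y') (a * ρ) : Set Eu) := by
      rw [MeasureTheory.ae_eq_set]
      constructor
      · simp [diff_eq_empty.2 ball_subset_closedBall]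
      · apply measure_mono_null (t := sphere (x₀ + a • y') (a * ρ))
        · rw [← closedBall_diff_ball]
        · haveI : Nonempty (Fin n) := Fin.pos_iff_nonempty.1 hn
          exact Measure.addHaar_sphere volume _ _
    have hfull : ∫ z in ball (x₀ + a • y') (a * ρ), fderiv ℝ g₀ z m
        = ∫ z : Eu, fderiv ℝ g₀ z m := by
      rw [setIntegral_congr_set hball_cb]
      exact setIntegral_eq_integral_of_forall_compl_eq_zero hptw
    -- integrability of the two pieces
    obtain ⟨Cu, hCu0, hCu⟩ := aux_fderiv_bound hu.1 (x₀ + a • y') (a * ρ)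
    obtain ⟨Cwh, hCwh0, hCwh⟩ := aux_fderiv_bound hwh_loc (x₀ + a • y') (a * ρ)
    have iu : IntegrableOn (fun z : Eu => fderiv ℝ u z m) (ball (x₀ + a • y') (a * ρ)) volume := by
      apply aux_integrableOn_ball (measurable_fderiv_apply_const (𝕜 := ℝ) (f := u) m).aestronglyMeasurable
        _ _ (Cu * ‖m‖)
      intro x hxB
      calc |fderiv ℝ u x m| ≤ ‖fderiv ℝ u x‖ * ‖m‖ := (fderiv ℝ u x).le_opNorm m
      _ ≤ Cu * ‖m‖ := by gcongr; exact hCu x hxB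
    have iwh : IntegrableOn (fun z : Eu => fderiv ℝ wh z m) (ball (x₀ + a • y') (a * ρ)) volume := by
      apply aux_integrableOn_ball (measurable_fderiv_apply_const (𝕜 := ℝ) (f := wh) m).aestronglyMeasurable
        _ _ (Cwh * ‖m‖)
      intro x hxB
      calc |fderiv ℝ wh x m| ≤ ‖fderiv ℝ wh x‖ * ‖m‖ := (fderiv ℝ wh x).le_opNorm m
      _ ≤ Cwh * ‖m‖ := by gcongr; exact hCwh x hxB
    have hae : ∀ᵐ z : Eu, fderiv ℝ wh z m - fderiv ℝ u z m = fderiv ℝ g₀ z m := by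
      filter_upwards [aux_ae_differentiableAt hwh_loc, aux_ae_differentiableAt hu.1] with z h1 h2
      rw [hg₀, fderiv_fun_sub h1 h2]
      simp
    have : ∫ z in ball (x₀ + a • y') (a * ρ), (fderiv ℝ wh z m - fderiv ℝ u z m)
        = ∫ z in ball (x₀ + a • y') (a * ρ), fderiv ℝ g₀ z m :=
      integral_congr_ae (ae_restrict_of_ae hae)
    have hdiff := integral_sub iwh iu
    rw [this, hfull, hzero] at hdiff
    linarith [hdiff]
  -- final computation
  have hJu := aux_J_eq σ hσmeas M hσbdd x₀ ha hb c m hu.1 y' ρ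
  have hJw := aux_J_eq σ hσmeas M hσbdd x₀ ha hb c m hwh_loc y' ρ
  have hww : (fun x : Eu => (wh (x₀ + a • x) - (c + (inner ℝ m (x₀ + a • x) : ℝ))) / b) = w := by
    funext x; exact hwh_w x
  rw [hww] at hJw
  rw [hJu, hJw, cross]
  have hcoeff : (0:ℝ) ≤ (a/b)^2 * (a^n)⁻¹ := by positivity
  set X := Jx n σ u (ball (x₀ + a • y') (a * ρ))
  set Y := Jx n σ wh (ball (x₀ + a • y') (a * ρ))
  set Cc := ∫ z in ball (x₀ + a • y') (a * ρ), fderiv ℝ u z m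
  set Dd := 1/2 * ‖m‖^2 * (volume (ball (x₀ + a • y') (a * ρ))).toReal
  have h1 : X - Cc + Dd ≤ Y - Cc + Dd := by linarith [key]
  calc (a/b)^2 * ((a^n)⁻¹ * (X - Cc + Dd)) = ((a/b)^2 * (a^n)⁻¹) * (X - Cc + Dd) := by ring
  _ ≤ ((a/b)^2 * (a^n)⁻¹) * (Y - Cc + Dd) := mul_le_mul_of_nonneg_left h1 hcoeff
  _ = (a/b)^2 * ((a^n)⁻¹ * (Y - Cc + Dd)) := by ring

end AuxEuclidean

/-- With `ℓ(x) = c + m·x` affine, `u` is a local minimizer of `J_σ` in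
`B_a(x₀)` if and only if `v(x) = (u(x₀+ax) − ℓ(x₀+ax))/b` is a local minimizer in `B₁` of
the functional with potential `σ*(x,t) = b⁻² a² σ(x₀ + a x, b t + ℓ(x₀ + a x))`. -/
theorem affine_rescaled_minimizer (n : ℕ) (hn : 2 ≤ n)
    (σ : EuclideanSpace ℝ (Fin n) → ℝ → ℝ)
    (hσmeas : Measurable (Function.uncurry σ))
    (hσbdd : ∃ M, ∀ x t, |σ x t| ≤ M)
    (x₀ : EuclideanSpace ℝ (Fin n)) (hx₀ : x₀ ∈ ball (0 : EuclideanSpace ℝ (Fin n)) 1)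
    (a b : ℝ) (ha : 0 < a) (hb : 0 < b)
    (c : ℝ) (m : EuclideanSpace ℝ (Fin n))
    (u : EuclideanSpace ℝ (Fin n) → ℝ) :
    IsLocMinX n σ u (ball x₀ a) ↔
      IsLocMinX n
        (fun x t => b⁻¹^2 * a^2 * σ (x₀ + a • x) (b * t + (c + inner ℝ m (x₀ + a • x))))
        (fun x => (u (x₀ + a • x) - (c + inner ℝ m (x₀ + a • x))) / b)
        (ball (0 : EuclideanSpace ℝ (Fin n)) 1) := by
  obtain ⟨M, hM⟩ := hσbdd
  have hn0 : 0 < n := by omega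
  constructor
  · intro h
    have h' : IsLocMinX n σ u (ball (x₀ + a • (0 : EuclideanSpace ℝ (Fin n))) (a * 1)) := by
      simpa using h
    simpa using aux_core hn0 σ hσmeas M hM x₀ ha hb c m u 0 1 h'
  · intro h
    -- inverse transformation parameters
    set a' : ℝ := a⁻¹ with ha'def
    set b' : ℝ := b⁻¹ with hb'def
    set x₀' : EuclideanSpace ℝ (Fin n) := -(a⁻¹ • x₀) with hx₀'def
    set c' : ℝ := -((c + inner ℝ m x₀) / b) with hc'def
    set m' : EuclideanSpace ℝ (Fin n) := -((a / b) • m) with hm'def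
    have ha' : 0 < a' := by positivity
    have hb' : 0 < b' := by positivity
    set σs : EuclideanSpace ℝ (Fin n) → ℝ → ℝ :=
      fun x t => b⁻¹^2 * a^2 * σ (x₀ + a • x) (b * t + (c + inner ℝ m (x₀ + a • x))) with hσs
    -- measurability of σs
    have hG : Measurable (fun p : EuclideanSpace ℝ (Fin n) × ℝ =>
        ((x₀ + a • p.1 : EuclideanSpace ℝ (Fin n)),
          b * p.2 + (c + (inner ℝ m (x₀ + a • p.1) : ℝ)))) := by
      apply Measurable.prodMk
      · exact (measurable_fst.const_smul a).const_add x₀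
      · exact (measurable_snd.const_mul b).add
          (((innerSL ℝ m).continuous.measurable.comp
            ((measurable_fst.const_smul a).const_add x₀)).const_add c)
    have hσsmeas : Measurable (Function.uncurry σs) :=
      (hσmeas.comp hG).const_mul (b⁻¹^2 * a^2)
    have hσsbdd : ∀ x t, |σs x t| ≤ b⁻¹^2 * a^2 * M := by
      intro x t
      rw [hσs, abs_mul, abs_of_nonneg (by positivity : (0:ℝ) ≤ b⁻¹^2 * a^2)]
      exact mul_le_mul_of_nonneg_left (hM _ _) (by positivity)
    -- key algebraic identities
    have hainv : ∀ x : EuclideanSpace ℝ (Fin n), x₀ + a • (x₀' + a' • x) = x := by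
      intro x
      rw [hx₀'def, ha'def, smul_add, smul_neg, smul_smul, smul_smul, mul_inv_cancel₀ ha.ne',
        one_smul, one_smul]
      abel
    have hinner' : ∀ x : EuclideanSpace ℝ (Fin n),
        (inner ℝ m' (x₀' + a' • x) : ℝ) = -((inner ℝ m x - inner ℝ m x₀ : ℝ) / b) := by
      intro x
      have h1 : (x₀' + a' • x : EuclideanSpace ℝ (Fin n)) = a⁻¹ • (x - x₀) := by
        rw [hx₀'def, ha'def, smul_sub]
        abel
      rw [hm'def, h1, inner_neg_left, real_inner_smul_left, real_inner_smul_right,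
        inner_sub_right]
      field_simp
    -- apply the core lemma with the inverse parameters
    have hcore := aux_core hn0 σs hσsmeas (b⁻¹^2 * a^2 * M) hσsbdd x₀' ha' hb' c' m'
      (fun x => (u (x₀ + a • x) - (c + inner ℝ m (x₀ + a • x))) / b) x₀ a ?hmin
    case hmin =>
      have hball : (ball (x₀' + a' • x₀) (a' * a) : Set (EuclideanSpace ℝ (Fin n)))
          = ball 0 1 := by
        rw [hx₀'def, ha'def, inv_mul_cancel₀ ha.ne']
        congr 1
        abel
      rw [hball]
      exact h
    -- now simplify the conclusion of hcore to the desired statement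
    have hufun : (fun x : EuclideanSpace ℝ (Fin n) =>
        ((fun x => (u (x₀ + a • x) - (c + inner ℝ m (x₀ + a • x))) / b) (x₀' + a' • x)
          - (c' + inner ℝ m' (x₀' + a' • x))) / b') = u := by
      funext x
      simp only []
      rw [hinner', hainv, hc'def, hb'def]
      field_simp
      ring
    have hσfun : (fun x t => b'⁻¹^2 * a'^2 *
        σs (x₀' + a' • x) (b' * t + (c' + inner ℝ m' (x₀' + a' • x)))) = σ := by
      funext x t
      rw [hinner', hσs]
      simp only [hainv]
      rw [hc'def, ha'def, hb'def]
      have : b * (b⁻¹ * t + (-((c + inner ℝ m x₀) / b) + -((inner ℝ m x - inner ℝ m x₀ : ℝ) / b)))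
          + (c + (inner ℝ m x : ℝ)) = t := by
        field_simp
        ring
      rw [this]
      field_simp
    rw [hufun, hσfun] at hcore
    exact hcore
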